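/- (Theorem 2, one-step bound for the accelerated scheme) Assume the stability bounds (NE1) and (NE2) with 0 < λ_min ≤ λ_max, so that P is bijective, and let 0 < λ̲ ≤ λ_min ≤ λ_max ≤ λ̄ with κ̄ = λ̄/λ̲. Let e_u, e_v ∈ V, let 1 ≤ p ≤ n+1, and let I be a uniform random subset of size p of {0,1,…,n}. Define η = (λ̄ λ̲)^{-1/2}, β = 1 − p/((n+1)√κ̄), α ∈ (0,1) by (1−α)/α = (n+1) λ̄ η / p, and set e_w = α e_v + (1−α) e_u, D = Σ_{i∈I} ω_i R_i T_i e_w, e_u' = e_w − λ̄^{-1} D, e_v' = β e_v + (1−β) e_w − η D. Then E( ‖e_u'‖² + λ̲ a(P^{-1}e_v', e_v') ) ≤ (1 − p/((n+1)√κ̄)) ( ‖e_u‖² + λ̲ a(P^{-1}e_v, e_v) ). -/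

import Mathlib

private lemma count_mem_powersetCard {n k : ℕ} (i : Fin (n+1)) :
    ((Finset.powersetCard (k+1) (Finset.univ : Finset (Fin (n+1)))).filter
      (fun I => i ∈ I)).card = n.choose k := by
  classical
  have h : ((Finset.powersetCard (k+1) (Finset.univ : Finset (Fin (n+1)))).filter
      (fun I => i ∈ I)).card
      = (Finset.powersetCard k ((Finset.univ : Finset (Fin (n+1))).erase i)).card := by
    apply Finset.card_bij' (fun I _ => I.erase i) (fun J _ => insert i J)
    · intro I hI
      rw [Finset.mem_filter] at hI
      exact Finset.insert_erase hI.2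
    · intro J hJ
      rw [Finset.mem_powersetCard] at hJ
      have hiJ : i ∉ J := fun h => (Finset.mem_erase.1 (hJ.1 h)).1 rfl
      exact Finset.erase_insert hiJ
    · intro I hI
      rw [Finset.mem_filter, Finset.mem_powersetCard] at hI
      rw [Finset.mem_powersetCard]
      refine ⟨fun x hx => Finset.mem_erase.2 ⟨(Finset.mem_erase.1 hx).1, Finset.mem_univ x⟩, ?_⟩
      rw [Finset.card_erase_of_mem hI.2, hI.1.2, Nat.add_sub_cancel]
    · intro J hJ
      rw [Finset.mem_powersetCard] at hJ
      have hiJ : i ∉ J := fun h => (Finset.mem_erase.1 (hJ.1 h)).1 rfl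
      rw [Finset.mem_filter, Finset.mem_powersetCard]
      exact ⟨⟨Finset.subset_univ _, by rw [Finset.card_insert_of_notMem hiJ, hJ.2]⟩,
        Finset.mem_insert_self i J⟩
  rw [h, Finset.card_powersetCard, Finset.card_erase_of_mem (Finset.mem_univ i),
    Finset.card_univ, Fintype.card_fin, Nat.add_sub_cancel]

private lemma sum_powersetCard_sum {M : Type*} [AddCommMonoid M] {n k : ℕ}
    (g : Fin (n+1) → M) :
    ∑ I ∈ Finset.powersetCard (k+1) (Finset.univ : Finset (Fin (n+1))), ∑ i ∈ I, g i
      = n.choose k • ∑ i, g i := by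
  classical
  calc ∑ I ∈ Finset.powersetCard (k+1) (Finset.univ : Finset (Fin (n+1))), ∑ i ∈ I, g i
      = ∑ I ∈ Finset.powersetCard (k+1) (Finset.univ : Finset (Fin (n+1))), ∑ i : Fin (n+1),
          if i ∈ I then g i else 0 := by
        refine Finset.sum_congr rfl fun I _ => ?_
        rw [Finset.sum_ite_mem, Finset.univ_inter]
    _ = ∑ i : Fin (n+1), ∑ I ∈ Finset.powersetCard (k+1) (Finset.univ : Finset (Fin (n+1))),
          if i ∈ I then g i else 0 := Finset.sum_comm
    _ = ∑ i : Fin (n+1), n.choose k • g i := by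
        refine Finset.sum_congr rfl fun i _ => ?_
        rw [Finset.sum_ite, Finset.sum_const, Finset.sum_const_zero, add_zero,
          count_mem_powersetCard i]
    _ = n.choose k • ∑ i, g i := (Finset.smul_sum).symm

open scoped RealInnerProductSpace

set_option maxHeartbeats 1000000

/-- **Theorem 2, one-step bound for the accelerated scheme.** Assume (NE1),
(NE2) with `0 < λ_min ≤ λ_max` (so `P` is bijective, with inverse `Q = P⁻¹`), and let
`0 < λ̲ ≤ λ_min ≤ λ_max ≤ λ̄`, `κ̄ = λ̄/λ̲`. With `η = (λ̄λ̲)^{-1/2}`,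
`β = 1 − p/((n+1)√κ̄)`, `α ∈ (0,1)` with `(1−α)/α = (n+1)λ̄η/p`,
`e_w = α e_v + (1−α) e_u`, `D = ∑_{i∈I} ω_i R_i T_i e_w`, `e_u' = e_w − λ̄⁻¹ D`,
`e_v' = β e_v + (1−β) e_w − η D`, and `I` a uniform random subset of size `p` of `{0,…,n}`:
`E(‖e_u'‖² + λ̲ a(P⁻¹e_v', e_v')) ≤ (1 − p/((n+1)√κ̄)) (‖e_u‖² + λ̲ a(P⁻¹e_v, e_v))`. -/
theorem accelerated_one_step_bound
    {V : Type*} [NormedAddCommGroup V] [InnerProductSpace ℝ V] [CompleteSpace V]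
    {n : ℕ} {W : Fin (n + 1) → Type*}
    [∀ i, NormedAddCommGroup (W i)] [∀ i, InnerProductSpace ℝ (W i)]
    [∀ i, CompleteSpace (W i)]
    (R : ∀ i, W i →L[ℝ] V) (ω : Fin (n + 1) → ℝ) (hω : ∀ i, 0 < ω i)
    (lmin lmax : ℝ) (hlmin : 0 < lmin) (hminmax : lmin ≤ lmax)
    (hNE1 : ∀ v : V,
      lmin * ‖v‖ ^ 2 ≤ ⟪(∑ i, ω i • R i ((ContinuousLinearMap.adjoint (R i)) v)), v⟫)
    (hNE2 : ∀ w : ∀ i, W i,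
      ‖∑ i, ω i • R i (w i)‖ ^ 2 ≤ lmax * ∑ i, ω i * ‖w i‖ ^ 2)
    (Q : V →L[ℝ] V)
    (hPQ : ∀ v : V, (∑ i, ω i • R i ((ContinuousLinearMap.adjoint (R i)) (Q v))) = v)
    (hQP : ∀ v : V, Q (∑ i, ω i • R i ((ContinuousLinearMap.adjoint (R i)) v)) = v)
    (ll lb : ℝ) (hll : 0 < ll) (hlllmin : ll ≤ lmin) (hlmaxlb : lmax ≤ lb)
    (eu ev : V) (p : ℕ) (hp1 : 1 ≤ p) (hp2 : p ≤ n + 1)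
    (η : ℝ) (hη : η = (Real.sqrt (lb * ll))⁻¹)
    (β : ℝ) (hβ : β = 1 - (p : ℝ) / ((n + 1) * Real.sqrt (lb / ll)))
    (α : ℝ) (hα : α ∈ Set.Ioo (0 : ℝ) 1)
    (hαeq : (1 - α) / α = (n + 1) * lb * η / p)
    (ew : V) (hew : ew = α • ev + (1 - α) • eu)
    (D : Finset (Fin (n + 1)) → V)
    (hD : ∀ I, D I = ∑ i ∈ I, ω i • R i ((ContinuousLinearMap.adjoint (R i)) ew))
    (eu' ev' : Finset (Fin (n + 1)) → V)
    (heu' : ∀ I, eu' I = ew - lb⁻¹ • D I)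
    (hev' : ∀ I, ev' I = β • ev + (1 - β) • ew - η • D I) :
    (((n + 1).choose p : ℝ))⁻¹ *
        ∑ I ∈ Finset.powersetCard p (Finset.univ : Finset (Fin (n + 1))),
          (‖eu' I‖ ^ 2 + ll * ⟪Q (ev' I), ev' I⟫) ≤
      (1 - (p : ℝ) / ((n + 1) * Real.sqrt (lb / ll))) *
        (‖eu‖ ^ 2 + ll * ⟪Q ev, ev⟫) := by
  classical
  obtain ⟨k, rfl⟩ : ∃ k, p = k + 1 := ⟨p - 1, (Nat.succ_pred_eq_of_pos hp1).symm⟩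
  set T : ∀ i, V →L[ℝ] W i := fun i => ContinuousLinearMap.adjoint (R i) with hTdef
  -- basic adjoint identity
  have key : ∀ (I : Finset (Fin (n+1))) (v u : V),
      ⟪∑ i ∈ I, ω i • R i (T i v), u⟫ = ∑ i ∈ I, ω i * ⟪T i v, T i u⟫ := by
    intro I v u
    rw [sum_inner]
    refine Finset.sum_congr rfl fun i _ => ?_
    rw [real_inner_smul_left]
    congr 1
    rw [real_inner_comm, ← ContinuousLinearMap.adjoint_inner_left (R i), real_inner_comm]
  have Psymm : ∀ v u : V, ⟪∑ i, ω i • R i (T i v), u⟫ = ⟪v, ∑ i, ω i • R i (T i u)⟫ := by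
    intro v u
    calc ⟪∑ i, ω i • R i (T i v), u⟫ = ∑ i, ω i * ⟪T i v, T i u⟫ := key _ _ _
    _ = ∑ i, ω i * ⟪T i u, T i v⟫ := Finset.sum_congr rfl fun i _ => by rw [real_inner_comm]
    _ = ⟪∑ i, ω i • R i (T i u), v⟫ := (key _ _ _).symm
    _ = ⟪v, ∑ i, ω i • R i (T i u)⟫ := real_inner_comm _ _
  have Qsymm : ∀ x y : V, ⟪Q x, y⟫ = ⟪x, Q y⟫ := by
    intro x y
    calc ⟪Q x, y⟫ = ⟪Q x, ∑ i, ω i • R i (T i (Q y))⟫ := by rw [hPQ]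
    _ = ⟪∑ i, ω i • R i (T i (Q x)), Q y⟫ := by rw [Psymm]
    _ = ⟪x, Q y⟫ := by rw [hPQ]
  have Qpos : ∀ v : V, 0 ≤ ⟪Q v, v⟫ := by
    intro v
    have h1 : ⟪Q v, v⟫ = ∑ i, ω i * ⟪T i (Q v), T i (Q v)⟫ := by
      calc ⟪Q v, v⟫ = ⟪v, Q v⟫ := real_inner_comm _ _
      _ = ⟪∑ i, ω i • R i (T i (Q v)), Q v⟫ := by rw [hPQ]
      _ = ∑ i, ω i * ⟪T i (Q v), T i (Q v)⟫ := key _ _ _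
    rw [h1]
    exact Finset.sum_nonneg fun i _ => mul_nonneg (hω i).le real_inner_self_nonneg
  have hlb : 0 < lb := lt_of_lt_of_le hll (hlllmin.trans (hminmax.trans hlmaxlb))
  have QleNorm : ∀ v : V, ll * ⟪Q v, v⟫ ≤ ‖v‖ ^ 2 := by
    intro v
    have hx : lmin * ‖Q v‖ ^ 2 ≤ ⟪Q v, v⟫ := by
      have h := hNE1 (Q v)
      rwa [hPQ, real_inner_comm] at h
    have hcs : ⟪Q v, v⟫ ≤ ‖Q v‖ * ‖v‖ := real_inner_le_norm _ _
    have hq : 0 ≤ ⟪Q v, v⟫ := Qpos v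
    rcases eq_or_lt_of_le hq with h0 | h0
    · rw [← h0, mul_zero]; positivity
    · have h1 : lmin * ⟪Q v, v⟫ * ⟪Q v, v⟫ ≤ ‖v‖ ^ 2 * ⟪Q v, v⟫ := by
        nlinarith [mul_le_mul_of_nonneg_right hx (sq_nonneg ‖v‖),
          mul_le_mul_of_nonneg_left (mul_self_le_mul_self hq hcs) hlmin.le]
      have h2 : lmin * ⟪Q v, v⟫ ≤ ‖v‖ ^ 2 := le_of_mul_le_mul_right h1 h0
      nlinarith
  -- sums of local norms
  set SI : Finset (Fin (n + 1)) → ℝ := fun I => ∑ i ∈ I, ω i * ‖T i ew‖ ^ 2 with hSI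
  have SInonneg : ∀ I, 0 ≤ SI I :=
    fun I => Finset.sum_nonneg fun i _ => mul_nonneg (hω i).le (sq_nonneg _)
  have hDinner : ∀ I, ⟪D I, ew⟫ = SI I := by
    intro I
    rw [hD I, key]
    exact Finset.sum_congr rfl fun i _ => by rw [real_inner_self_eq_norm_sq]
  have hDnorm : ∀ I, ‖D I‖ ^ 2 ≤ lb * SI I := by
    intro I
    have h := hNE2 (fun i => if i ∈ I then T i ew else 0)
    have e1 : ∑ i, ω i • R i (if i ∈ I then T i ew else 0) = D I := by
      rw [hD I]
      calc ∑ i, ω i • R i (if i ∈ I then T i ew else 0)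
          = ∑ i, (if i ∈ I then ω i • R i (T i ew) else 0) :=
            Finset.sum_congr rfl fun i _ => by by_cases hi : i ∈ I <;> simp [hi]
        _ = ∑ i ∈ Finset.univ ∩ I, ω i • R i (T i ew) := Finset.sum_ite_mem _ _ _
        _ = ∑ i ∈ I, ω i • R i (T i ew) := by rw [Finset.univ_inter]
    have e2 : ∑ i, ω i * ‖(if i ∈ I then T i ew else 0 : W i)‖ ^ 2 = SI I := by
      rw [hSI]
      calc ∑ i, ω i * ‖(if i ∈ I then T i ew else 0 : W i)‖ ^ 2
          = ∑ i, (if i ∈ I then ω i * ‖T i ew‖ ^ 2 else 0) :=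
            Finset.sum_congr rfl fun i _ => by by_cases hi : i ∈ I <;> simp [hi]
        _ = ∑ i ∈ Finset.univ ∩ I, ω i * ‖T i ew‖ ^ 2 := Finset.sum_ite_mem _ _ _
        _ = ∑ i ∈ I, ω i * ‖T i ew‖ ^ 2 := by rw [Finset.univ_inter]
    rw [e1, e2] at h
    exact h.trans (mul_le_mul_of_nonneg_right hlmaxlb (SInonneg I))
  have hQDD : ∀ I, ⟪Q (D I), D I⟫ ≤ SI I := by
    intro I
    set z := Q (D I) with hz
    have hXnn : 0 ≤ ⟪Q (D I), D I⟫ := Qpos _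
    have hXsum : ⟪Q (D I), D I⟫ = ∑ i ∈ I, ω i * ⟪T i ew, T i z⟫ := by
      calc ⟪Q (D I), D I⟫ = ⟪D I, z⟫ := real_inner_comm _ _
      _ = ∑ i ∈ I, ω i * ⟪T i ew, T i z⟫ := by rw [hD I]; exact key _ _ _
    have hY : ∑ i, ω i * ‖T i z‖ ^ 2 = ⟪Q (D I), D I⟫ := by
      calc ∑ i, ω i * ‖T i z‖ ^ 2 = ∑ i, ω i * ⟪T i z, T i z⟫ :=
            Finset.sum_congr rfl fun i _ => by rw [real_inner_self_eq_norm_sq]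
      _ = ⟪∑ i, ω i • R i (T i z), z⟫ := (key _ _ _).symm
      _ = ⟪D I, z⟫ := by rw [hz, hPQ]
      _ = ⟪Q (D I), D I⟫ := (real_inner_comm _ _).symm
    have h1 : ⟪Q (D I), D I⟫
        ≤ ∑ i ∈ I, (Real.sqrt (ω i) * ‖T i z‖) * (Real.sqrt (ω i) * ‖T i ew‖) := by
      rw [hXsum]
      refine Finset.sum_le_sum fun i _ => ?_
      have hc : ⟪T i ew, T i z⟫ ≤ ‖T i z‖ * ‖T i ew‖ := by
        rw [real_inner_comm]; exact real_inner_le_norm _ _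
      have hsq : Real.sqrt (ω i) * Real.sqrt (ω i) = ω i := Real.mul_self_sqrt (hω i).le
      calc ω i * ⟪T i ew, T i z⟫ ≤ ω i * (‖T i z‖ * ‖T i ew‖) :=
            mul_le_mul_of_nonneg_left hc (hω i).le
      _ = (Real.sqrt (ω i) * ‖T i z‖) * (Real.sqrt (ω i) * ‖T i ew‖) := by
            rw [mul_mul_mul_comm, hsq]
    have h2 := Finset.sum_mul_sq_le_sq_mul_sq I (fun i => Real.sqrt (ω i) * ‖T i z‖)
      (fun i => Real.sqrt (ω i) * ‖T i ew‖)
    have e3 : ∀ (y : ∀ i, W i) (i : Fin (n+1)),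
        (Real.sqrt (ω i) * ‖y i‖) ^ 2 = ω i * ‖y i‖ ^ 2 := by
      intro y i
      rw [mul_pow, Real.sq_sqrt (hω i).le]
    have h3 : ∑ i ∈ I, (Real.sqrt (ω i) * ‖T i z‖) ^ 2 ≤ ⟪Q (D I), D I⟫ := by
      rw [← hY]
      refine le_trans (le_of_eq (Finset.sum_congr rfl fun i _ => e3 (fun j => T j z) i)) ?_
      exact Finset.sum_le_sum_of_subset_of_nonneg (Finset.subset_univ I)
        (fun i _ _ => mul_nonneg (hω i).le (sq_nonneg _))
    have h4 : ∑ i ∈ I, (Real.sqrt (ω i) * ‖T i ew‖) ^ 2 = SI I :=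
      Finset.sum_congr rfl fun i _ => e3 (fun j => T j ew) i
    have hCnn : 0 ≤ ∑ i ∈ I, (Real.sqrt (ω i) * ‖T i z‖) * (Real.sqrt (ω i) * ‖T i ew‖) :=
      Finset.sum_nonneg fun i _ =>
        mul_nonneg (mul_nonneg (Real.sqrt_nonneg _) (norm_nonneg _))
          (mul_nonneg (Real.sqrt_nonneg _) (norm_nonneg _))
    have hCS : ⟪Q (D I), D I⟫ ^ 2 ≤ ⟪Q (D I), D I⟫ * SI I := by
      calc ⟪Q (D I), D I⟫ ^ 2
          ≤ (∑ i ∈ I, (Real.sqrt (ω i) * ‖T i z‖) * (Real.sqrt (ω i) * ‖T i ew‖)) ^ 2 :=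
            pow_le_pow_left₀ hXnn h1 2
        _ ≤ (∑ i ∈ I, (Real.sqrt (ω i) * ‖T i z‖) ^ 2)
              * (∑ i ∈ I, (Real.sqrt (ω i) * ‖T i ew‖) ^ 2) := h2
        _ ≤ ⟪Q (D I), D I⟫ * SI I := by
            rw [h4]
            exact mul_le_mul_of_nonneg_right h3 (SInonneg I)
    rcases eq_or_lt_of_le hXnn with h0 | h0
    · rw [← h0]; exact SInonneg I
    · have h5 : ⟪Q (D I), D I⟫ * ⟪Q (D I), D I⟫ ≤ ⟪Q (D I), D I⟫ * SI I := by
        nlinarith [hCS]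
      exact le_of_mul_le_mul_left h5 h0
  -- scalar constants
  set s : ℝ := Real.sqrt (lb / ll) with hs
  set r : ℝ := Real.sqrt (lb * ll) with hr
  set τ : ℝ := ((k : ℝ) + 1) / ((n : ℝ) + 1) with hτ
  clear_value s r τ
  have hrpos : 0 < r := by rw [hr]; exact Real.sqrt_pos.2 (by positivity)
  have hr2 : r ^ 2 = lb * ll := by rw [hr]; exact Real.sq_sqrt (by positivity)
  have hs2 : s ^ 2 = lb / ll := by rw [hs]; exact Real.sq_sqrt (by positivity)
  have hspos : 0 < s := by rw [hs]; exact Real.sqrt_pos.2 (by positivity)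
  have hs1 : 1 ≤ s := by
    rw [hs, show (1:ℝ) = Real.sqrt 1 from Real.sqrt_one.symm]
    exact Real.sqrt_le_sqrt (by rw [le_div_iff₀ hll]; linarith)
  have hsr : s * r = lb := by
    rw [hs, hr, ← Real.sqrt_mul (by positivity) (lb * ll),
      show lb / ll * (lb * ll) = lb ^ 2 by field_simp]
    exact Real.sqrt_sq hlb.le
  have hlls : ll * s = r := by
    have e : (ll * s) ^ 2 = r ^ 2 := by
      rw [mul_pow, hs2, hr2]; field_simp
    calc ll * s = Real.sqrt ((ll * s) ^ 2) := (Real.sqrt_sq (by positivity)).symm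
    _ = Real.sqrt (r ^ 2) := by rw [e]
    _ = r := Real.sqrt_sq hrpos.le
  have hlbη : lb * η = s := by
    rw [hη, ← hsr, mul_assoc, mul_inv_cancel₀ hrpos.ne', mul_one]
  have hllη : ll * η = s⁻¹ := by
    rw [hη, ← hlls]
    rw [mul_inv, ← mul_assoc, mul_inv_cancel₀ hll.ne']
    rw [one_mul]
  have hkey1 : ll * η ^ 2 = lb⁻¹ := by
    have e : η ^ 2 = (lb * ll)⁻¹ := by rw [hη, inv_pow, hr2]
    rw [e]; field_simp
  have hτpos : 0 < τ := by rw [hτ]; positivity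
  have hτ1 : τ ≤ 1 := by
    rw [hτ, div_le_one (by positivity)]
    have : (k:ℝ) + 1 ≤ (n:ℝ) + 1 := by exact_mod_cast hp2
    linarith
  have h1β : 1 - β = τ / s := by
    rw [hβ, hτ]; push_cast; field_simp; ring
  have hβ0 : 0 ≤ β := by
    have h : τ / s ≤ 1 := by
      rw [div_le_one hspos]; linarith
    linarith [h1β]
  have hβ1 : β ≤ 1 := by
    have h : 0 ≤ τ / s := by positivity
    linarith [h1β]
  have hα0 : 0 < α := hα.1
  have hα1 : α < 1 := hα.2
  have hαrow : τ * (1 - α) = α * s := by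
    have h : (1 - α) = ((↑n + 1) * lb * η / (↑(k+1))) * α := by
      rw [← hαeq]; field_simp
    rw [h, mul_assoc ((n:ℝ) + 1) lb η, hlbη, hτ]
    push_cast
    field_simp
  have hk1 : (1 - β) * (1 - α) = α := by
    rw [h1β, div_mul_eq_mul_div, div_eq_iff hspos.ne']
    linear_combination hαrow
  have hk2 : 1 - β = α * (2 - β) := by linear_combination hk1
  have hone : (2 - β) * (1 - α) = 1 :=
    mul_left_cancel₀ hα0.ne' (by linear_combination hk1 - (1 - α) * hk2)
  have hllητ : (ll * η) * τ = 1 - β := by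
    rw [hllη, h1β, inv_mul_eq_div]
  -- convexity of the Q-quadratic form
  set gv : V := β • ev + (1 - β) • ew with hgv
  clear_value gv
  have hQee : ⟪Q ew, ev⟫ = ⟪Q ev, ew⟫ := by rw [Qsymm, real_inner_comm]
  have hcross : 2 * ⟪Q ev, ew⟫ ≤ ⟪Q ev, ev⟫ + ⟪Q ew, ew⟫ := by
    have h := Qpos (ev - ew)
    rw [map_sub, inner_sub_left, inner_sub_right, inner_sub_right, hQee] at h
    linarith
  have hconv : ⟪Q gv, gv⟫ ≤ β * ⟪Q ev, ev⟫ + (1 - β) * ⟪Q ew, ew⟫ := by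
    have hexp : ⟪Q gv, gv⟫ = β^2 * ⟪Q ev, ev⟫ + (2*(β*(1-β))) * ⟪Q ev, ew⟫
        + (1-β)^2 * ⟪Q ew, ew⟫ := by
      rw [hgv]
      simp only [map_add, map_smul, inner_add_left, inner_add_right,
        real_inner_smul_left, real_inner_smul_right]
      rw [hQee]; ring
    rw [hexp]
    nlinarith [mul_nonneg (mul_nonneg hβ0 (by linarith : (0:ℝ) ≤ 1 - β))
      (by linarith [hcross] : 0 ≤ ⟪Q ev, ev⟫ + ⟪Q ew, ew⟫ - 2*⟪Q ev, ew⟫)]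
  -- expansions of the updates
  have hQDg : ∀ I, ⟪Q (D I), gv⟫ = ⟪Q gv, D I⟫ := fun I => by rw [Qsymm, real_inner_comm]
  have hevI : ∀ I, ⟪Q (ev' I), ev' I⟫
      = ⟪Q gv, gv⟫ - 2*η*⟪Q gv, D I⟫ + η^2 * ⟪Q (D I), D I⟫ := by
    intro I
    rw [hev' I]
    simp only [map_sub, map_smul, inner_sub_left, inner_sub_right,
      real_inner_smul_left, real_inner_smul_right]
    rw [hQDg I]; ring
  have heuI : ∀ I, ‖eu' I‖^2 ≤ ‖ew‖^2 - lb⁻¹ * SI I := by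
    intro I
    rw [heu' I, norm_sub_sq_real]
    have e1 : ⟪ew, lb⁻¹ • D I⟫ = lb⁻¹ * SI I := by
      rw [real_inner_smul_right, real_inner_comm, hDinner I]
    have e2 : ‖lb⁻¹ • D I‖^2 ≤ lb⁻¹ * SI I := by
      rw [norm_smul, Real.norm_eq_abs, abs_of_pos (inv_pos.2 hlb), mul_pow]
      calc lb⁻¹^2 * ‖D I‖^2 ≤ lb⁻¹^2 * (lb * SI I) :=
            mul_le_mul_of_nonneg_left (hDnorm I) (by positivity)
      _ = lb⁻¹ * SI I := by field_simp
    rw [e1]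
    linarith [e2]
  -- per-sample bound
  have hperI : ∀ I ∈ Finset.powersetCard (k+1) (Finset.univ : Finset (Fin (n+1))),
      ‖eu' I‖^2 + ll * ⟪Q (ev' I), ev' I⟫
        ≤ (‖ew‖^2 + ll * ⟪Q gv, gv⟫) - (2*(ll*η)) * ⟪Q gv, D I⟫ := by
    intro I _
    have h2 : ll * ⟪Q (ev' I), ev' I⟫
        ≤ ll * ⟪Q gv, gv⟫ - (2*(ll*η)) * ⟪Q gv, D I⟫ + (ll * η^2) * SI I := by
      rw [hevI I]
      nlinarith [mul_le_mul_of_nonneg_left (hQDD I) (mul_nonneg hll.le (sq_nonneg η))]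
    have h1 := heuI I
    rw [hkey1] at h2
    linarith
  -- summation over all p-subsets
  have hcard : ((Finset.powersetCard (k+1) (Finset.univ : Finset (Fin (n+1)))).card : ℝ)
      = (((n+1).choose (k+1) : ℕ) : ℝ) := by
    rw [Finset.card_powersetCard, Finset.card_univ, Fintype.card_fin]
  have hNpos : (0:ℝ) < (((n+1).choose (k+1) : ℕ) : ℝ) := by
    exact_mod_cast Nat.choose_pos hp2
  have hsumD : ∑ I ∈ Finset.powersetCard (k+1) (Finset.univ : Finset (Fin (n+1))), D I
      = (n.choose k) • ∑ i, ω i • R i (T i ew) := by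
    calc ∑ I ∈ Finset.powersetCard (k+1) (Finset.univ : Finset (Fin (n+1))), D I
        = ∑ I ∈ Finset.powersetCard (k+1) (Finset.univ : Finset (Fin (n+1))),
            ∑ i ∈ I, ω i • R i (T i ew) := Finset.sum_congr rfl fun I _ => hD I
      _ = (n.choose k) • ∑ i, ω i • R i (T i ew) := sum_powersetCard_sum _
  have hPQg : ⟪Q gv, ∑ i, ω i • R i (T i ew)⟫ = ⟪gv, ew⟫ := by
    rw [← Psymm, hPQ]
  have hsumX : ∑ I ∈ Finset.powersetCard (k+1) (Finset.univ : Finset (Fin (n+1))),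
      ⟪Q gv, D I⟫ = ((n.choose k : ℕ) : ℝ) * ⟪gv, ew⟫ := by
    rw [← inner_sum, hsumD, ← Nat.cast_smul_eq_nsmul ℝ, real_inner_smul_right, hPQg]
  have hsumAll : ∑ I ∈ Finset.powersetCard (k+1) (Finset.univ : Finset (Fin (n+1))),
      (‖eu' I‖^2 + ll * ⟪Q (ev' I), ev' I⟫)
      ≤ (((n+1).choose (k+1) : ℕ) : ℝ) * (‖ew‖^2 + ll * ⟪Q gv, gv⟫)
        - (2*(ll*η)) * (((n.choose k : ℕ) : ℝ) * ⟪gv, ew⟫) := by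
    calc ∑ I ∈ Finset.powersetCard (k+1) (Finset.univ : Finset (Fin (n+1))),
        (‖eu' I‖^2 + ll * ⟪Q (ev' I), ev' I⟫)
        ≤ ∑ I ∈ Finset.powersetCard (k+1) (Finset.univ : Finset (Fin (n+1))),
            ((‖ew‖^2 + ll * ⟪Q gv, gv⟫) - (2*(ll*η)) * ⟪Q gv, D I⟫) :=
          Finset.sum_le_sum hperI
      _ = (((n+1).choose (k+1) : ℕ) : ℝ) * (‖ew‖^2 + ll * ⟪Q gv, gv⟫)
          - (2*(ll*η)) * (((n.choose k : ℕ) : ℝ) * ⟪gv, ew⟫) := by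
        rw [Finset.sum_sub_distrib, Finset.sum_const, ← Finset.mul_sum, hsumX,
          nsmul_eq_mul, hcard]
  -- ratio of binomial coefficients
  have hchoose : ((n:ℝ)+1) * ((n.choose k : ℕ) : ℝ)
      = (((n+1).choose (k+1) : ℕ) : ℝ) * ((k:ℝ)+1) := by
    exact_mod_cast Nat.add_one_mul_choose_eq n k
  have hratio : ((n.choose k : ℕ) : ℝ) = (((n+1).choose (k+1) : ℕ) : ℝ) * τ := by
    rw [hτ]
    field_simp
    linarith [hchoose]
  -- final assembly
  rw [← hβ]
  have hmono := mul_le_mul_of_nonneg_left hsumAll (inv_nonneg.2 hNpos.le)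
  refine le_trans hmono ?_
  have hEq : (((n+1).choose (k+1) : ℕ) : ℝ)⁻¹ *
      ((((n+1).choose (k+1) : ℕ) : ℝ) * (‖ew‖^2 + ll * ⟪Q gv, gv⟫)
        - (2*(ll*η)) * ((((n.choose k : ℕ)) : ℝ) * ⟪gv, ew⟫))
      = (‖ew‖^2 + ll * ⟪Q gv, gv⟫) - (2*(1-β)) * ⟪gv, ew⟫ := by
    rw [hratio, ← hllητ]
    field_simp
  rw [hEq]
  -- scalar endgame
  have hgew : ⟪gv, ew⟫ = β * ⟪ev, ew⟫ + (1-β) * ‖ew‖^2 := by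
    rw [hgv, inner_add_left, real_inner_smul_left, real_inner_smul_left,
      real_inner_self_eq_norm_sq]
  have hewE : ‖ew‖^2 = α * ⟪ev, ew⟫ + (1-α) * ⟪eu, ew⟫ := by
    rw [← real_inner_self_eq_norm_sq]
    nth_rewrite 1 [hew]
    rw [inner_add_left, real_inner_smul_left, real_inner_smul_left]
  have hnormsq : 0 ≤ ‖eu‖^2 - 2*⟪eu, ew⟫ + ‖ew‖^2 := by
    have h := sq_nonneg ‖eu - ew‖
    rw [norm_sub_sq_real] at h
    linarith
  have hQgb : ll * ⟪Q gv, gv⟫ ≤ β * (ll * ⟪Q ev, ev⟫) + (1-β) * ‖ew‖^2 := by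
    have h2 := mul_le_mul_of_nonneg_left (QleNorm ew) (by linarith : (0:ℝ) ≤ 1 - β)
    calc ll * ⟪Q gv, gv⟫ ≤ ll * (β * ⟪Q ev, ev⟫ + (1 - β) * ⟪Q ew, ew⟫) :=
        mul_le_mul_of_nonneg_left hconv hll.le
    _ = β * (ll * ⟪Q ev, ev⟫) + (1-β) * (ll * ⟪Q ew, ew⟫) := by ring
    _ ≤ β * (ll * ⟪Q ev, ev⟫) + (1-β) * ‖ew‖^2 := by linarith
  have hd : 2*(1-β)*β*⟪ev, ew⟫ = 2*β*(2-β)*‖ew‖^2 - 2*β*⟪eu, ew⟫ := by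
    linear_combination (2*β*⟪ev, ew⟫)*hk2 - (2*β*(2-β))*hewE - (2*β*⟪eu, ew⟫)*hone
  have hgew2 : (2*(1-β)) * ⟪gv, ew⟫
      = 2*(1-β)*β*⟪ev, ew⟫ + 2*(1-β)*(1-β)*‖ew‖^2 := by
    linear_combination (2*(1-β))*hgew
  have hprod : 0 ≤ β * (‖eu‖^2 - 2*⟪eu, ew⟫ + ‖ew‖^2) := mul_nonneg hβ0 hnormsq
  linarith [hQgb, hd, hgew2, hprod]
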